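/- Fix a face index j shared by two cells a, b. Suppose for every velocity vector v and density vector ρ with ρ > 0, the per-face energy-residual condition [ (e_a(v) − e_b(v)) − ((h_a(ρ)+Φ_a) − (h_b(ρ)+Φ_b)) (r_j(ρ) − 1) ] · (M₁)_{jj} c = 0 holds for all c ∈ ℝ, where v = c·e_j is supported on face j alone, e_i(v) = (1/2)|P(c e_j)|_i² are the cell kinetic-energy densities (quadratic in c with, by assumption, |P e_j|_a² ≠ |P e_j|_b² for some admissible configuration), h_i(ρ), Φ_i depend only on ρ and on fixed data, r_j is a function of ρ alone, and (M₁)_{jj} > 0. Then no choice of the density-only interpolation r_j(ρ) can satisfy the condition for all c: if (h_a+Φ_a) ≠ (h_b+Φ_b) the required r_j would depend on c through e_a − e_b (contradiction with r_j being a function of ρ alone), and if (h_a+Φ_a) = (h_b+Φ_b) the bracket reduces to e_a(v) − e_b(v) = (c²/2)(|Pe_j|_a² − |Pe_j|_b²) ≠ 0 for c ≠ 0. -/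
import Mathlib


/-- **Face-isolation core of the no-go theorem (C-grid).**
On a face `j` shared by cells `a, b`, the per-face energy-residual condition
`[(e_a − e_b) − ((h_a+Φ_a) − (h_b+Φ_b))(r_j − 1)] · (M₁)_{jj} c = 0`,
required for all single-face velocities `v = c e_j` and all admissible
densities, cannot be satisfied by any density-only interpolation `r_j(ρ)`
when the kinetic-energy reconstruction distinguishes the two adjacent cells
(`|P e_j|_a² ≠ |P e_j|_b²`). -/
theorem no_go_face_isolation
    {α : Type*} (ρ₀ : α)
    (ha hb : α → ℝ) (Φa Φb : ℝ)
    (r : α → ℝ)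
    (Mjj : ℝ) (hMjj : 0 < Mjj)
    (kea keb : ℝ) (hke : kea ≠ keb)
    (hresid : ∀ (ρ : α) (c : ℝ),
      ((c ^ 2 / 2 * kea - c ^ 2 / 2 * keb)
        - ((ha ρ + Φa) - (hb ρ + Φb)) * (r ρ - 1)) * (Mjj * c) = 0) :
    False := by
  have h1 := hresid ρ₀ 1
  have h2 := hresid ρ₀ 2
  have : kea = keb := by nlinarith [sq_nonneg (kea - keb), hMjj.ne']
  exact hke this
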